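/- arXiv:2603.28527 — 3 statements merged into one kernel-verified Lean document; each statement's English description precedes it below -/
import Mathlib

section
/- Let H_L = (S† ⊗ I₂) · U(π/4) · (I₂ ⊗ S) on ℂ²⊗ℂ², where U(θ) = cos θ·I₄ + i sin θ·SWAP and S = diag(1,i). Then H_L† · U(3π/4) · H_L = e^{3iπ/4} · diag(1, 1, i, 1) in the basis |00⟩,|01⟩,|10⟩,|11⟩; i.e. up to global phase this is a logical phase gate S_L = diag(1, i) on the logical subspace span{|01⟩,|10⟩}. -/
open Matrix Complex

noncomputable section

/-- The two-qubit SWAP gate in the basis `|00⟩,|01⟩,|10⟩,|11⟩`. -/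
def SWAP : Matrix (Fin 4) (Fin 4) ℂ :=
  !![1,0,0,0; 0,0,1,0; 0,1,0,0; 0,0,0,1]

/-- The exchange gate `U(θ) = cos θ·I₄ + i sin θ·SWAP`. -/
def U (θ : ℝ) : Matrix (Fin 4) (Fin 4) ℂ :=
  (Real.cos θ : ℂ) • (1 : Matrix (Fin 4) (Fin 4) ℂ) + (Complex.I * (Real.sin θ : ℂ)) • SWAP

/-- `S† ⊗ I₂ = diag(1, 1, -i, -i)` in the basis `|00⟩,|01⟩,|10⟩,|11⟩`. -/
def SdagI : Matrix (Fin 4) (Fin 4) ℂ := Matrix.diagonal ![1, 1, -Complex.I, -Complex.I]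

/-- `I₂ ⊗ S = diag(1, i, 1, i)` in the basis `|00⟩,|01⟩,|10⟩,|11⟩`. -/
def IS : Matrix (Fin 4) (Fin 4) ℂ := Matrix.diagonal ![1, Complex.I, 1, Complex.I]

/-- The logical Hadamard `H_L = (S† ⊗ I₂) · U(π/4) · (I₂ ⊗ S)`. -/
def HL : Matrix (Fin 4) (Fin 4) ℂ := SdagI * U (Real.pi / 4) * IS

set_option maxHeartbeats 1000000 in
/-- `H_L† · U(3π/4) · H_L = e^{3iπ/4} · diag(1, 1, i, 1)`: the logical phase gate. -/
theorem logical_phase_gate :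
    HLᴴ * U (3 * Real.pi / 4) * HL
      = Complex.exp (Complex.I * (3 * Real.pi / 4)) • Matrix.diagonal ![1, 1, Complex.I, 1] := by
  have hr : Real.sqrt 2 * Real.sqrt 2 = 2 := Real.mul_self_sqrt (by norm_num)
  have hI2 : Complex.I ^ 2 = -1 := Complex.I_sq
  have hI3 : Complex.I ^ 3 = -Complex.I := by rw [pow_succ, Complex.I_sq]; ring
  have hc4 : Real.cos (Real.pi / 4) = Real.sqrt 2 / 2 := Real.cos_pi_div_four
  have hs4 : Real.sin (Real.pi / 4) = Real.sqrt 2 / 2 := Real.sin_pi_div_four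
  have hc34 : Real.cos (3 * Real.pi / 4) = -(Real.sqrt 2 / 2) := by
    rw [show (3:ℝ) * Real.pi / 4 = Real.pi - Real.pi/4 by ring, Real.cos_pi_sub, hc4]
  have hs34 : Real.sin (3 * Real.pi / 4) = Real.sqrt 2 / 2 := by
    rw [show (3:ℝ) * Real.pi / 4 = Real.pi - Real.pi/4 by ring, Real.sin_pi_sub, hs4]
  set c : ℂ := ((Real.sqrt 2 / 2 : ℝ) : ℂ) with hcdef
  have hexp : Complex.exp (Complex.I * (3 * Real.pi / 4)) = -c + Complex.I * c := by
    rw [show Complex.I * (3 * (Real.pi:ℂ) / 4) = ((3 * Real.pi / 4 : ℝ) : ℂ) * Complex.I by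
      push_cast; ring]
    rw [Complex.exp_mul_I, ← Complex.ofReal_cos, ← Complex.ofReal_sin, hc34, hs34, hcdef]
    push_cast; ring
  have hHL : HL = !![c + Complex.I*c, 0, 0, 0;
      0, Complex.I*c, Complex.I*c, 0;
      0, Complex.I*c, -(Complex.I*c), 0;
      0, 0, 0, c + Complex.I*c] := by
    unfold HL U SdagI IS SWAP
    rw [hc4, hs4, ← hcdef]
    ext i j
    fin_cases i <;> fin_cases j <;>
      simp [Matrix.mul_apply, Fin.sum_univ_four, Matrix.diagonal, Matrix.one_apply,
        Matrix.vecHead, Matrix.vecTail] <;>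
      (first | ring1 | linear_combination (-c*Complex.I) * Complex.I_mul_I | linear_combination (-(c+Complex.I*c)) * Complex.I_mul_I)
  have hU34 : U (3 * Real.pi / 4) = !![-c + Complex.I*c, 0, 0, 0;
      0, -c, Complex.I*c, 0;
      0, Complex.I*c, -c, 0;
      0, 0, 0, -c + Complex.I*c] := by
    unfold U SWAP
    rw [hc34, hs34]
    push_cast
    rw [show -((Real.sqrt 2 : ℂ)/2) = -c by rw [hcdef]; push_cast; ring,
        show ((Real.sqrt 2 : ℂ)/2) = c by rw [hcdef]; push_cast; ring]
    ext i j
    fin_cases i <;> fin_cases j <;>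
      simp [Matrix.one_apply, Matrix.vecHead, Matrix.vecTail] <;> ring
  rw [hHL, hU34, hexp]
  have hc2 : c * c = 1 / 2 := by
    rw [hcdef, ← Complex.ofReal_mul]
    norm_num [div_mul_div_comm, hr]
  have hconj : (starRingEnd ℂ) c = c := by rw [hcdef]; exact Complex.conj_ofReal _
  have hcre : c.re = Real.sqrt 2 / 2 := by rw [hcdef]; simp
  have hcim : c.im = 0 := by rw [hcdef]; simp
  have hsq : Real.sqrt 2 ^ 2 = 2 := Real.sq_sqrt (by norm_num)
  ext i j
  fin_cases i <;> fin_cases j <;>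
    simp [Matrix.mul_apply, Fin.sum_univ_four, Matrix.diagonal, Matrix.conjTranspose_apply,
      Matrix.vecHead, Matrix.vecTail, Complex.ext_iff, hconj, hcre, hcim] <;>
    ring_nf <;>
    norm_num [show Real.sqrt 2 ^ 3 = 2 * Real.sqrt 2 by rw [pow_succ, hsq]] <;>
    ring_nf
end
end

section
/- The number arccos(5/8)/π is irrational. Equivalently, the angle φ = arccos(5/8) is an irrational multiple of π, so any rotation of SU(2) by angle φ generates an infinite cyclic subgroup. -/
/-- The integer sequence with `bSeq n / 4^n = 2 cos (n θ)` for `θ = arccos (5/8)`. -/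
def bSeq : ℕ → ℤ
  | 0 => 2
  | 1 => 5
  | (n + 2) => 5 * bSeq (n + 1) - 16 * bSeq n

lemma bSeq_odd : ∀ n : ℕ, Odd (bSeq (n + 1)) := by
  intro n
  induction n using Nat.twoStepInduction with
  | zero => exact ⟨2, rfl⟩
  | one => show Odd (bSeq 2); rw [show bSeq 2 = -7 from rfl]; exact ⟨-4, by norm_num⟩
  | more n ih1 ih2 =>
    show Odd (5 * bSeq (n + 2) - 16 * bSeq (n + 1))
    exact (Odd.mul ⟨2, rfl⟩ ih2).sub_even (Even.mul_right (⟨8, by norm_num⟩ : Even (16:ℤ)) _)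

lemma cos_identity (θ : ℝ) (n : ℕ) :
    Real.cos ((n + 2) * θ) = 2 * Real.cos θ * Real.cos ((n + 1) * θ) - Real.cos (n * θ) := by
  have h1 : ((n : ℝ) + 2) * θ = (n + 1) * θ + θ := by ring
  have h2 : (n : ℝ) * θ = (n + 1) * θ - θ := by ring
  rw [h1, h2, Real.cos_add, Real.cos_sub]
  ring

lemma bSeq_cos : ∀ n : ℕ, 2 * Real.cos (n * Real.arccos (5 / 8)) = bSeq n / 4 ^ n := by
  have hcos : Real.cos (Real.arccos (5 / 8)) = 5 / 8 :=
    Real.cos_arccos (by norm_num) (by norm_num)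
  intro n
  induction n using Nat.twoStepInduction with
  | zero => simp [bSeq]
  | one => simp [bSeq, hcos]; norm_num
  | more n ih1 ih2 =>
    have key := cos_identity (Real.arccos (5 / 8)) n
    rw [hcos] at key
    rw [show bSeq (n + 2) = 5 * bSeq (n + 1) - 16 * bSeq n from rfl]
    push_cast
    push_cast at key ih1 ih2
    rw [key]
    linear_combination (5 / 4) * ih2 - ih1

/-- `arccos(5/8)/π` is irrational: the angle `φ = arccos(5/8)` is an irrational multiple
of `π`. -/
theorem arccos_five_eighths_div_pi_irrational :
    Irrational (Real.arccos (5 / 8) / Real.pi) := by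
  intro ⟨q, hq⟩
  have hpi : Real.pi ≠ 0 := Real.pi_ne_zero
  have hθ : Real.arccos (5 / 8) = q * Real.pi := by
    field_simp at hq; linarith [hq]
  set N : ℕ := 2 * q.den with hN
  have hNθ : (N : ℝ) * Real.arccos (5 / 8) = q.num * (2 * Real.pi) := by
    rw [hθ, hN]
    have : ((q.den : ℝ)) * q = q.num := by
      rw_mod_cast [Rat.den_mul_eq_num]
    push_cast
    linear_combination 2 * Real.pi * this
  have hc := bSeq_cos N
  rw [hNθ, Real.cos_int_mul_two_pi] at hc
  have h4 : (4 : ℝ) ^ N ≠ 0 := by positivity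
  have hint : (bSeq N : ℝ) = 2 * 4 ^ N := by
    field_simp at hc; linarith
  have hint' : bSeq N = 2 * 4 ^ N := by exact_mod_cast hint
  have hodd : Odd (bSeq N) := by
    have hd := q.den_pos
    have : N = (2 * q.den - 1) + 1 := by rw [hN]; omega
    rw [this]; exact bSeq_odd _
  rw [hint'] at hodd
  exact ((Int.not_odd_iff_even.mpr ·) ⟨4 ^ N, by ring⟩) hodd
end

section
/- Call a word Y ∈ {0,1}ⁿ a valid Yamanouchi symbol if every prefix of Y contains at least as many 0s as 1s. Let n be even and let Y₁, Y₂ ∈ {0,1}ⁿ be valid Yamanouchi symbols with the same number of 1-entries. Then there exists a sequence of at most n(n−2)/4 adjacent transpositions (swaps of positions i and i+1) transforming Y₁ into Y₂ such that every intermediate word in the sequence is also a valid Yamanouchi symbol. -/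
/-- A word `Y ∈ {0,1}ⁿ` is a valid Yamanouchi symbol if every prefix contains at least
as many 0s as 1s. -/
def IsYamanouchi {n : ℕ} (Y : Fin n → Fin 2) : Prop :=
  ∀ m : ℕ,
    (Finset.univ.filter fun i : Fin n => (i : ℕ) < m ∧ Y i = 1).card ≤
      (Finset.univ.filter fun i : Fin n => (i : ℕ) < m ∧ Y i = 0).card

/-- Apply a list of transpositions of positions to a word. -/
def applySwaps {n : ℕ} (L : List (Fin n × Fin n)) (Y : Fin n → Fin 2) : Fin n → Fin 2 :=
  L.foldl (fun Z p => Z ∘ Equiv.swap p.1 p.2) Y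


section YamAux

open Finset

variable {n : ℕ}

def cnt (Y : Fin n → Fin 2) (m : ℕ) : ℕ :=
  (Finset.univ.filter fun i : Fin n => (i : ℕ) < m ∧ Y i = 1).card

lemma filter_lt_succ (P : Fin n → Prop) [DecidablePred P] (m : ℕ) :
    (Finset.univ.filter fun i : Fin n => (i : ℕ) < m + 1 ∧ P i).card
      = (Finset.univ.filter fun i : Fin n => (i : ℕ) < m ∧ P i).card
        + (if h : m < n then (if P ⟨m, h⟩ then 1 else 0) else 0) := by
  by_cases h : m < n
  · rw [dif_pos h]
    have hsplit : (Finset.univ.filter fun i : Fin n => (i : ℕ) < m + 1 ∧ P i)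
        = (Finset.univ.filter fun i : Fin n => (i : ℕ) < m ∧ P i)
          ∪ (Finset.univ.filter fun i : Fin n => i = ⟨m, h⟩ ∧ P i) := by
      ext i
      simp only [mem_filter, mem_union, mem_univ, true_and]
      constructor
      · rintro ⟨hlt, hP⟩
        rcases (by omega : (i : ℕ) < m ∨ (i : ℕ) = m) with h' | h'
        · exact Or.inl ⟨h', hP⟩
        · exact Or.inr ⟨Fin.ext h', hP⟩
      · rintro (⟨h', hP⟩ | ⟨h', hP⟩)
        · exact ⟨by omega, hP⟩
        · subst h'; exact ⟨by simp, hP⟩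
    have hdisj : Disjoint (Finset.univ.filter fun i : Fin n => (i : ℕ) < m ∧ P i)
        (Finset.univ.filter fun i : Fin n => i = ⟨m, h⟩ ∧ P i) := by
      rw [Finset.disjoint_left]
      rintro i hi hi'
      simp only [mem_filter, mem_univ, true_and] at hi hi'
      rcases hi' with ⟨rfl, -⟩
      exact absurd hi.1 (by simp)
    rw [hsplit, card_union_of_disjoint hdisj]
    congr 1
    by_cases hP : P ⟨m, h⟩
    · rw [if_pos hP]
      have : (Finset.univ.filter fun i : Fin n => i = ⟨m, h⟩ ∧ P i) = {⟨m, h⟩} := by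
        ext i; simp only [mem_filter, mem_univ, true_and, mem_singleton]
        constructor
        · rintro ⟨rfl, -⟩; rfl
        · rintro rfl; exact ⟨rfl, hP⟩
      rw [this, card_singleton]
    · rw [if_neg hP]
      have : (Finset.univ.filter fun i : Fin n => i = ⟨m, h⟩ ∧ P i) = ∅ := by
        ext i; simp only [mem_filter, mem_univ, true_and, notMem_empty, iff_false]
        rintro ⟨rfl, hP'⟩; exact hP hP'
      rw [this, card_empty]
  · rw [dif_neg h, add_zero]
    congr 1
    apply filter_congr
    intro i _
    have := i.isLt
    constructor
    · rintro ⟨h', hP⟩; exact ⟨by omega, hP⟩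
    · rintro ⟨h', hP⟩; exact ⟨by omega, hP⟩

lemma cnt_zero (Y : Fin n → Fin 2) : cnt Y 0 = 0 := by simp [cnt]

lemma cnt_succ (Y : Fin n → Fin 2) (m : ℕ) :
    cnt Y (m + 1) = cnt Y m + (if h : m < n then (if Y ⟨m, h⟩ = 1 then 1 else 0) else 0) :=
  filter_lt_succ (fun i => Y i = 1) m

lemma cnt_le_succ (Y : Fin n → Fin 2) (m : ℕ) :
    cnt Y m ≤ cnt Y (m + 1) ∧ cnt Y (m + 1) ≤ cnt Y m + 1 := by
  rw [cnt_succ]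
  split <;> [skip; omega]
  split <;> omega

lemma fin2_cases (y : Fin 2) : y = 0 ∨ y = 1 := by omega

lemma card_lt_eq (m : ℕ) :
    (Finset.univ.filter fun i : Fin n => (i : ℕ) < m ∧ True).card = min m n := by
  induction m with
  | zero => simp
  | succ m ih =>
    rw [filter_lt_succ (fun _ => True) m, ih]
    by_cases h : m < n
    · rw [dif_pos h, if_pos trivial]; omega
    · rw [dif_neg h]; omega

lemma cnt_add_zcnt (Y : Fin n → Fin 2) (m : ℕ) :
    cnt Y m + (Finset.univ.filter fun i : Fin n => (i : ℕ) < m ∧ Y i = 0).card = min m n := by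
  rw [← card_lt_eq (n := n) m]
  unfold cnt
  rw [← Finset.card_union_of_disjoint]
  · congr 1
    ext i
    simp only [mem_union, mem_filter, mem_univ, true_and, and_true]
    constructor
    · rintro (⟨h1, -⟩ | ⟨h1, -⟩) <;> exact h1
    · intro h1; rcases fin2_cases (Y i) with h | h
      · exact Or.inr ⟨h1, h⟩
      · exact Or.inl ⟨h1, h⟩
  · rw [Finset.disjoint_left]
    rintro i hi hi'
    simp only [mem_filter, mem_univ, true_and] at hi hi'
    rw [hi.2] at hi'
    exact absurd hi'.2 (by decide)

lemma isYam_iff (Y : Fin n → Fin 2) :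
    IsYamanouchi Y ↔ ∀ m : ℕ, 2 * cnt Y m ≤ min m n := by
  unfold IsYamanouchi
  constructor
  · intro h m
    have h1 := cnt_add_zcnt Y m
    have h2 := h m
    unfold cnt at *
    omega
  · intro h m
    have h1 := cnt_add_zcnt Y m
    have h2 := h m
    unfold cnt at *
    omega

lemma cnt_stable (Y : Fin n → Fin 2) {m : ℕ} (h : n ≤ m) : cnt Y m = cnt Y n := by
  induction m with
  | zero =>
    have : n = 0 := by omega
    subst this
    rfl
  | succ m ih =>
    rcases Nat.lt_or_ge m n with h' | h'
    · have : n = m + 1 := by omega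
      subst this
      rfl
    · rw [cnt_succ, dif_neg (by omega), add_zero, ih h']

lemma cnt_n (Y : Fin n → Fin 2) :
    cnt Y n = (Finset.univ.filter fun i : Fin n => Y i = 1).card := by
  unfold cnt
  congr 1
  apply filter_congr
  intro i _
  simp [i.isLt]

lemma eq_of_cnt_eq {Y Z : Fin n → Fin 2} (h : ∀ m, cnt Y m = cnt Z m) : Y = Z := by
  funext i
  have hi := i.isLt
  have h1 := cnt_succ Y (i : ℕ)
  have h2 := cnt_succ Z (i : ℕ)
  rw [dif_pos hi] at h1 h2
  have hYi : (⟨(i : ℕ), hi⟩ : Fin n) = i := rfl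
  rw [hYi] at h1 h2
  have h3 := h (i : ℕ)
  have h4 := h ((i : ℕ) + 1)
  rcases fin2_cases (Y i) with hY | hY <;> rcases fin2_cases (Z i) with hZ | hZ <;>
    simp [hY, hZ] at h1 h2 ⊢ <;> omega

lemma swap_val_lt {a : ℕ} (ha : a + 1 < n) (m : ℕ) (hm : m ≠ a + 1) (i : Fin n) :
    ((Equiv.swap (⟨a, by omega⟩ : Fin n) ⟨a + 1, ha⟩ i : Fin n) : ℕ) < m ↔ (i : ℕ) < m := by
  rcases eq_or_ne i ⟨a, by omega⟩ with rfl | h1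
  · rw [Equiv.swap_apply_left]; simp; omega
  · rcases eq_or_ne i ⟨a + 1, ha⟩ with rfl | h2
    · rw [Equiv.swap_apply_right]; simp; omega
    · rw [Equiv.swap_apply_of_ne_of_ne h1 h2]

lemma cnt_swap_ne (Y : Fin n → Fin 2) {a : ℕ} (ha : a + 1 < n) {m : ℕ} (hm : m ≠ a + 1) :
    cnt (Y ∘ Equiv.swap (⟨a, by omega⟩ : Fin n) ⟨a + 1, ha⟩) m = cnt Y m := by
  unfold cnt
  set σ := Equiv.swap (⟨a, by omega⟩ : Fin n) ⟨a + 1, ha⟩ with hσ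
  apply Finset.card_bij (fun i _ => σ i)
  · rintro i hi
    simp only [mem_filter, mem_univ, true_and, Function.comp] at hi ⊢
    exact ⟨(swap_val_lt ha m hm i).mpr hi.1, hi.2⟩
  · intro i _ j _ hij
    exact σ.injective hij
  · intro j hj
    simp only [mem_filter, mem_univ, true_and] at hj
    refine ⟨σ j, ?_, ?_⟩
    · simp only [mem_filter, mem_univ, true_and, Function.comp]
      constructor
      · exact (swap_val_lt ha m hm j).mpr hj.1
      · rw [hσ, Equiv.swap_apply_self]
        exact hj.2
    · rw [hσ, Equiv.swap_apply_self]

lemma cnt_swap_at (Y : Fin n → Fin 2) {a : ℕ} (ha : a + 1 < n) :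
    cnt (Y ∘ Equiv.swap (⟨a, by omega⟩ : Fin n) ⟨a + 1, ha⟩) (a + 1)
      = cnt Y a + (if Y ⟨a + 1, ha⟩ = 1 then 1 else 0) := by
  rw [cnt_succ, dif_pos (by omega : a < n), cnt_swap_ne Y ha (by omega : a ≠ a + 1)]
  congr 1
  have : (Y ∘ Equiv.swap (⟨a, by omega⟩ : Fin n) ⟨a + 1, ha⟩) ⟨a, by omega⟩ = Y ⟨a + 1, ha⟩ := by
    simp [Equiv.swap_apply_left]
  rw [this]

section Steps
variable {f : ℕ → ℕ}

def IsStep (f : ℕ → ℕ) : Prop := ∀ m, f m ≤ f (m + 1) ∧ f (m + 1) ≤ f m + 1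

lemma IsStep.mono (hf : IsStep f) : Monotone f :=
  monotone_nat_of_le_succ fun m => (hf m).1

lemma IsStep.le_add (hf : IsStep f) {a b : ℕ} (h : a ≤ b) : f b ≤ f a + (b - a) := by
  induction b with
  | zero =>
    have : a = 0 := by omega
    subst this; simp
  | succ b ih =>
    rcases Nat.lt_or_ge a (b + 1) with h' | h'
    · have h1 := (hf b).2
      have h2 := ih (by omega)
      omega
    · have : a = b + 1 := by omega
      subst this; simp

lemma IsStep.eq_of_no_up (hf : IsStep f) {a b : ℕ}
    (h : ∀ m, a ≤ m → m < b → f (m + 1) ≠ f m + 1) (hab : a ≤ b) : f b = f a := by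
  induction b with
  | zero =>
    have : a = 0 := by omega
    subst this; rfl
  | succ b ih =>
    rcases Nat.lt_or_ge a (b + 1) with h' | h'
    · have h1 := (hf b).1
      have h2 := (hf b).2
      have h3 := h b (by omega) (by omega)
      have h4 := ih (fun m hm hm' => h m hm (by omega)) (by omega)
      omega
    · have : a = b + 1 := by omega
      subst this; rfl

lemma IsStep.eq_of_all_up (hf : IsStep f) {a b : ℕ}
    (h : ∀ m, a ≤ m → m < b → f (m + 1) = f m + 1) (hab : a ≤ b) : f b = f a + (b - a) := by
  induction b with
  | zero =>
    have : a = 0 := by omega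
    subst this; simp
  | succ b ih =>
    rcases Nat.lt_or_ge a (b + 1) with h' | h'
    · have h3 := h b (by omega) (by omega)
      have h4 := ih (fun m hm hm' => h m hm (by omega)) (by omega)
      omega
    · have : a = b + 1 := by omega
      subst this; simp

open scoped Classical in
lemma exists_move {f g : ℕ → ℕ} {n : ℕ} (hf : IsStep f) (hg : IsStep g)
    (h0 : f 0 = g 0) (hn : f n = g n)
    (hne : ∃ m, m < n ∧ f m ≠ g m) :
    ∃ m₁, 1 ≤ m₁ ∧ m₁ + 1 ≤ n ∧
      ((f m₁ < g m₁ ∧ f m₁ = f (m₁ - 1) ∧ f (m₁ + 1) = f m₁ + 1) ∨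
       (g m₁ < f m₁ ∧ f m₁ = f (m₁ - 1) + 1 ∧ f (m₁ + 1) = f m₁)) := by
  obtain ⟨w, hwn, hw⟩ := hne
  have hex : ∃ m, f m ≠ g m := ⟨w, hw⟩
  obtain ⟨m₀, hm₀n, hspec, hmin⟩ :
      ∃ m₀, m₀ < n ∧ f m₀ ≠ g m₀ ∧ ∀ j, j < m₀ → f j = g j :=
    ⟨Nat.find hex, lt_of_le_of_lt (Nat.find_le hw) hwn, Nat.find_spec hex,
      fun j hj => not_not.mp (Nat.find_min hex hj)⟩
  have hm₀pos : 1 ≤ m₀ := by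
    rcases Nat.eq_zero_or_pos m₀ with h | h
    · rw [h] at hspec; exact absurd h0 hspec
    · exact h
  have hprev : f (m₀ - 1) = g (m₀ - 1) := hmin _ (by omega)
  have hfstep := hf (m₀ - 1)
  have hgstep := hg (m₀ - 1)
  have hm1 : m₀ - 1 + 1 = m₀ := by omega
  rw [hm1] at hfstep hgstep
  rcases Nat.lt_or_ge (f m₀) (g m₀) with hlt | hge
  · -- f m₀ < g m₀ : f flat into m₀
    have hflat : f m₀ = f (m₀ - 1) := by omega
    have hup : ∃ m, m₀ ≤ m ∧ f (m + 1) = f m + 1 := by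
      by_contra hno
      push_neg at hno
      have h1 : f n = f m₀ := hf.eq_of_no_up (fun m hm _ => hno m hm) (by omega)
      have hgn : g m₀ ≤ g n := hg.mono (by omega)
      omega
    obtain ⟨m₁, hm₁ge, hm₁up, hm₁min⟩ :
        ∃ m₁, m₀ ≤ m₁ ∧ f (m₁ + 1) = f m₁ + 1 ∧
          ∀ j, m₀ ≤ j → j < m₁ → f (j + 1) ≠ f j + 1 :=
      ⟨Nat.find hup, (Nat.find_spec hup).1, (Nat.find_spec hup).2,
        fun j hj hj' hcon => Nat.find_min hup hj' ⟨hj, hcon⟩⟩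
    have hconst : f m₁ = f m₀ := hf.eq_of_no_up hm₁min hm₁ge
    have hm₁n : m₁ + 1 ≤ n := by
      by_contra hcon
      have h1 : f n ≤ f m₁ := hf.mono (by omega)
      have hgn : g m₀ ≤ g n := hg.mono (by omega)
      omega
    refine ⟨m₁, by omega, hm₁n, Or.inl ⟨?_, ?_, hm₁up⟩⟩
    · have : g m₀ ≤ g m₁ := hg.mono hm₁ge
      omega
    · rcases Nat.eq_or_lt_of_le hm₁ge with heq | hlt'
      · rw [← heq]
        exact hflat
      · have : f (m₁ - 1) = f m₀ :=
          hf.eq_of_no_up (fun m hm hm' => hm₁min m hm (by omega)) (by omega)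
        omega
  · -- g m₀ < f m₀ : f up into m₀
    have hgt : g m₀ < f m₀ := by omega
    have hupin : f m₀ = f (m₀ - 1) + 1 := by omega
    have hdown : ∃ m, m₀ ≤ m ∧ f (m + 1) = f m := by
      by_contra hno
      push_neg at hno
      have hall : ∀ m, m₀ ≤ m → m < n → f (m + 1) = f m + 1 := by
        intro m hm _
        have h1 := (hf m).1
        have h2 := (hf m).2
        have h3 := hno m hm
        omega
      have h1 : f n = f m₀ + (n - m₀) := hf.eq_of_all_up hall (by omega)
      have h2 : g n ≤ g m₀ + (n - m₀) := hg.le_add (by omega)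
      omega
    obtain ⟨m₁, hm₁ge, hm₁flat, hm₁min⟩ :
        ∃ m₁, m₀ ≤ m₁ ∧ f (m₁ + 1) = f m₁ ∧
          ∀ j, m₀ ≤ j → j < m₁ → f (j + 1) = f j + 1 := by
      refine ⟨Nat.find hdown, (Nat.find_spec hdown).1, (Nat.find_spec hdown).2, ?_⟩
      intro j hj hj'
      have h1 := (hf j).1
      have h2 := (hf j).2
      have h3 : ¬(m₀ ≤ j ∧ f (j + 1) = f j) := Nat.find_min hdown hj'
      omega
    have hrise : f m₁ = f m₀ + (m₁ - m₀) := hf.eq_of_all_up hm₁min hm₁ge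
    have hm₁n : m₁ + 1 ≤ n := by
      by_contra hcon
      have h1 : f n = f m₀ + (n - m₀) :=
        hf.eq_of_all_up (fun m hm hm' => hm₁min m hm (by omega)) (by omega)
      have h2 : g n ≤ g m₀ + (n - m₀) := hg.le_add (by omega)
      omega
    refine ⟨m₁, by omega, hm₁n, Or.inr ⟨?_, ?_, hm₁flat⟩⟩
    · have : g m₁ ≤ g m₀ + (m₁ - m₀) := hg.le_add hm₁ge
      omega
    · rcases Nat.eq_or_lt_of_le hm₁ge with heq | hlt'
      · rw [← heq]
        exact hupin
      · have h1 : f (m₁ - 1) = f m₀ + (m₁ - 1 - m₀) :=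
          hf.eq_of_all_up (fun m hm hm' => hm₁min m hm (by omega)) (by omega)
        omega

end Steps

lemma cnt_isStep (Y : Fin n → Fin 2) : IsStep (cnt Y) := by
  intro m
  rw [cnt_succ]
  split
  · split <;> omega
  · omega

lemma main_construct (Y₂ : Fin n → Fin 2) (h2 : IsYamanouchi Y₂) :
    ∀ d (Y₁ : Fin n → Fin 2), IsYamanouchi Y₁ → cnt Y₁ n = cnt Y₂ n →
      (∑ m ∈ Finset.range n, Nat.dist (cnt Y₁ m) (cnt Y₂ m)) ≤ d →
      ∃ L : List (Fin n × Fin n), (∀ p ∈ L, (p.2 : ℕ) = (p.1 : ℕ) + 1) ∧ L.length ≤ d ∧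
        (∀ t : ℕ, IsYamanouchi (applySwaps (L.take t) Y₁)) ∧ applySwaps L Y₁ = Y₂ := by
  intro d
  induction d with
  | zero =>
    intro Y₁ h1 hwt hd
    have hzero : ∀ m, m ∈ Finset.range n → Nat.dist (cnt Y₁ m) (cnt Y₂ m) = 0 := by
      intro m hm
      have := Finset.sum_eq_zero_iff.mp (Nat.le_zero.mp hd) m hm
      exact this
    have heq : Y₁ = Y₂ := by
      apply eq_of_cnt_eq
      intro m
      rcases Nat.lt_or_ge m n with h | h
      · have := hzero m (Finset.mem_range.mpr h)
        exact Nat.eq_of_dist_eq_zero this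
      · rw [cnt_stable Y₁ h, cnt_stable Y₂ h, hwt]
    refine ⟨[], by simp, by simp, ?_, ?_⟩
    · intro t; simpa [applySwaps] using h1
    · simpa [applySwaps] using heq
  | succ d ih =>
    intro Y₁ h1 hwt hd
    by_cases hz : (∑ m ∈ Finset.range n, Nat.dist (cnt Y₁ m) (cnt Y₂ m)) = 0
    · obtain ⟨L, hL1, hL2, hL3, hL4⟩ := ih Y₁ h1 hwt (by omega)
      exact ⟨L, hL1, by omega, hL3, hL4⟩
    · have hne : ∃ m, m < n ∧ cnt Y₁ m ≠ cnt Y₂ m := by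
        by_contra hcon
        push_neg at hcon
        apply hz
        apply Finset.sum_eq_zero
        intro m hm
        rw [hcon m (Finset.mem_range.mp hm)]
        simp [Nat.dist]
      obtain ⟨m₁, hm₁pos, hm₁n, hcase⟩ :=
        exists_move (cnt_isStep Y₁) (cnt_isStep Y₂) (by simp [cnt]) hwt hne
      obtain ⟨a, rfl⟩ : ∃ a, m₁ = a + 1 := ⟨m₁ - 1, by omega⟩
      simp only [Nat.add_sub_cancel] at hcase
      have ha : a + 1 < n := by omega
      set p : Fin n := ⟨a, by omega⟩ with hp
      set q : Fin n := ⟨a + 1, ha⟩ with hq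
      set Y' : Fin n → Fin 2 := Y₁ ∘ Equiv.swap p q with hY'
      have hswapne : ∀ m : ℕ, m ≠ a + 1 → cnt Y' m = cnt Y₁ m := by
        intro m hm
        exact cnt_swap_ne Y₁ ha hm
      have hstep1 := cnt_succ Y₁ a
      have hstep2 := cnt_succ Y₁ (a + 1)
      rw [dif_pos (by omega : a < n)] at hstep1
      rw [dif_pos ha] at hstep2
      have hat : cnt Y' (a + 1) = cnt Y₁ a + (if Y₁ q = 1 then 1 else 0) :=
        cnt_swap_at Y₁ ha
      -- new count at a + 1
      have hkey : ∃ c', cnt Y' (a + 1) = c'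
          ∧ Nat.dist c' (cnt Y₂ (a + 1)) + 1 = Nat.dist (cnt Y₁ (a + 1)) (cnt Y₂ (a + 1))
          ∧ 2 * c' ≤ min (a + 1) n := by
        rcases hcase with ⟨hlt, hflat, hup⟩ | ⟨hgt, hupin, hflat⟩
        · -- Y₁ (a + 1-1) = 0, Y₁ a + 1 = 1, count at a + 1 goes up
          have hq1 : Y₁ q = 1 := by
            rcases fin2_cases (Y₁ q) with h | h
            · exfalso
              rw [if_neg (by rw [h]; decide)] at hstep2
              omega
            · exact h
          rw [if_pos hq1] at hat
          refine ⟨cnt Y₁ (a + 1) + 1, by omega, ?_, ?_⟩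
          · simp [Nat.dist]; omega
          · have hy2 := (isYam_iff Y₂).mp h2 (a + 1)
            omega
        · -- count at a + 1 goes down
          have hq0 : Y₁ q = 0 := by
            rcases fin2_cases (Y₁ q) with h | h
            · exact h
            · exfalso
              rw [if_pos h] at hstep2
              omega
          rw [if_neg (by rw [hq0]; decide)] at hat
          refine ⟨cnt Y₁ a, ?_, ?_, ?_⟩
          · omega
          · simp [Nat.dist]; omega
          · have hy1 := (isYam_iff Y₁).mp h1 (a + 1)
            omega
      obtain ⟨c', hc'eq, hc'dist, hc'yam⟩ := hkey
      have hY'yam : IsYamanouchi Y' := by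
        rw [isYam_iff]
        intro m
        rcases eq_or_ne m (a + 1) with rfl | hm
        · rw [hc'eq]; exact hc'yam
        · rw [hswapne m hm]
          exact (isYam_iff Y₁).mp h1 m
      have hY'wt : cnt Y' n = cnt Y₂ n := by
        rw [hswapne n (by omega)]; exact hwt
      have hY'sum : (∑ m ∈ Finset.range n, Nat.dist (cnt Y' m) (cnt Y₂ m)) ≤ d := by
        have hmem : a + 1 ∈ Finset.range n := Finset.mem_range.mpr (by omega)
        rw [← Finset.sum_erase_add _ _ hmem] at hd ⊢
        have heq : ∑ m ∈ (Finset.range n).erase (a + 1), Nat.dist (cnt Y' m) (cnt Y₂ m)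
            = ∑ m ∈ (Finset.range n).erase (a + 1), Nat.dist (cnt Y₁ m) (cnt Y₂ m) := by
          apply Finset.sum_congr rfl
          intro m hm
          rw [hswapne m (Finset.ne_of_mem_erase hm)]
        rw [heq, hc'eq]
        omega
      obtain ⟨L, hL1, hL2, hL3, hL4⟩ := ih Y' hY'yam hY'wt hY'sum
      refine ⟨(p, q) :: L, ?_, by simpa using hL2, ?_, hL4⟩
      · rintro r hr
        rcases List.mem_cons.mp hr with rfl | hr
        · simp [hp, hq]
        · exact hL1 r hr
      · intro t
        cases t with
        | zero => simpa [applySwaps] using h1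
        | succ t => exact hL3 t

lemma dist_sum_bound (hn : Even n) (Y₁ Y₂ : Fin n → Fin 2)
    (h1 : IsYamanouchi Y₁) (h2 : IsYamanouchi Y₂) (hw : cnt Y₁ n = cnt Y₂ n) :
    (∑ m ∈ Finset.range n, Nat.dist (cnt Y₁ m) (cnt Y₂ m)) ≤ n * (n - 2) / 4 := by
  have h2k0 : 2 * cnt Y₂ n ≤ n := by
    have := (isYam_iff Y₂).mp h2 n
    omega
  obtain ⟨k, hk⟩ : ∃ k, cnt Y₂ n = k := ⟨_, rfl⟩
  rw [hk] at hw h2k0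
  have h2k : 2 * k ≤ n := h2k0
  -- per-term bound
  have hper : ∀ m ∈ Finset.range n,
      2 * Nat.dist (cnt Y₁ m) (cnt Y₂ m) + 2 * (k - (n - m)) ≤ min (2 * k) m := by
    intro m hm
    rw [Finset.mem_range] at hm
    have hy1 := (isYam_iff Y₁).mp h1 m
    have hy2 := (isYam_iff Y₂).mp h2 m
    have hub1 : cnt Y₁ m ≤ cnt Y₁ n := (cnt_isStep Y₁).mono (by omega)
    have hub2 : cnt Y₂ m ≤ cnt Y₂ n := (cnt_isStep Y₂).mono (by omega)
    have hlb1 : cnt Y₁ n ≤ cnt Y₁ m + (n - m) := (cnt_isStep Y₁).le_add (by omega)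
    have hlb2 : cnt Y₂ n ≤ cnt Y₂ m + (n - m) := (cnt_isStep Y₂).le_add (by omega)
    simp only [Nat.dist]
    omega
  have hsum : (∑ m ∈ Finset.range n, (2 * Nat.dist (cnt Y₁ m) (cnt Y₂ m) + 2 * (k - (n - m))))
      ≤ ∑ m ∈ Finset.range n, min (2 * k) m := Finset.sum_le_sum hper
  rw [Finset.sum_add_distrib, ← Finset.mul_sum, ← Finset.mul_sum] at hsum
  set S := ∑ m ∈ Finset.range n, Nat.dist (cnt Y₁ m) (cnt Y₂ m) with hS
  set S₂ := ∑ m ∈ Finset.range n, (k - (n - m)) with hS₂def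
  set S₁ := ∑ m ∈ Finset.range n, min (2 * k) m with hS₁def
  -- compute S₁
  have hS₁ : 2 * S₁ = 2 * k * (2 * k - 1) + 2 * ((n - 2 * k) * (2 * k)) := by
    have hsplit : S₁ = (∑ m ∈ Finset.range (2 * k), min (2 * k) m)
        + ∑ m ∈ Finset.Ico (2 * k) n, min (2 * k) m := by
      rw [hS₁def, Finset.range_eq_Ico, ← Finset.sum_Ico_consecutive _ (Nat.zero_le (2 * k)) h2k, Finset.range_eq_Ico]
    have hfirst : (∑ m ∈ Finset.range (2 * k), min (2 * k) m) = ∑ m ∈ Finset.range (2 * k), m := by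
      apply Finset.sum_congr rfl
      intro m hm
      rw [Finset.mem_range] at hm
      omega
    have hgauss : (∑ m ∈ Finset.range (2 * k), m) * 2 = 2 * k * (2 * k - 1) :=
      Finset.sum_range_id_mul_two (2 * k)
    have hsecond : (∑ m ∈ Finset.Ico (2 * k) n, min (2 * k) m) = (n - 2 * k) * (2 * k) := by
      rw [Finset.sum_congr rfl (fun m hm => ?_), Finset.sum_const, Nat.card_Ico, smul_eq_mul]
      rw [Finset.mem_Ico] at hm
      omega
    rw [hsplit, hfirst, hsecond]
    omega
  -- compute S₂
  have hS₂ : 2 * S₂ = k * (k - 1) := by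
    have hrefl : S₂ = ∑ j ∈ Finset.range n, (k - (j + 1)) := by
      rw [hS₂def, ← Finset.sum_range_reflect (fun m => k - (n - m)) n]
      apply Finset.sum_congr rfl
      intro j hj
      rw [Finset.mem_range] at hj
      congr 1
      omega
    have hkn : k ≤ n := by omega
    have hsplit : (∑ j ∈ Finset.range n, (k - (j + 1)))
        = (∑ j ∈ Finset.range k, (k - (j + 1))) + ∑ j ∈ Finset.Ico k n, (k - (j + 1)) := by
      rw [Finset.range_eq_Ico, ← Finset.sum_Ico_consecutive _ (Nat.zero_le k) hkn, Finset.range_eq_Ico]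
    have hzero : (∑ j ∈ Finset.Ico k n, (k - (j + 1))) = 0 := by
      apply Finset.sum_eq_zero
      intro j hj
      rw [Finset.mem_Ico] at hj
      omega
    have hrefl2 : (∑ j ∈ Finset.range k, (k - (j + 1))) = ∑ j ∈ Finset.range k, j := by
      rw [← Finset.sum_range_reflect (fun j => k - (j + 1)) k]
      apply Finset.sum_congr rfl
      intro j hj
      rw [Finset.mem_range] at hj
      omega
    have hgauss : (∑ j ∈ Finset.range k, j) * 2 = k * (k - 1) :=
      Finset.sum_range_id_mul_two k
    rw [hrefl, hsplit, hzero, hrefl2]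
    omega
  -- combine
  have key : 4 * S + 2 * (k * (k - 1)) ≤ 2 * (2 * k * (2 * k - 1)) + 4 * ((n - 2 * k) * (2 * k)) := by
    have := Nat.mul_le_mul_left 2 hsum
    linarith [hS₁, hS₂]
  obtain ⟨s, hs⟩ := hn
  rcases Nat.eq_zero_or_pos s with rfl | hspos
  · have : n = 0 := by omega
    subst this
    simp [hS]
  obtain ⟨t, rfl⟩ : ∃ t, s = t + 1 := ⟨s - 1, by omega⟩
  have hquarter : n * (n - 2) / 4 = t * t + t := by
    have hn2 : n = 2 * t + 2 := by omega
    have h1 : n * (n - 2) = 4 * (t * t + t) := by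
      rw [hn2]
      have : 2 * t + 2 - 2 = 2 * t := by omega
      rw [this]
      ring
    rw [h1]
    exact Nat.mul_div_cancel_left _ (by norm_num)
  rw [hquarter]
  obtain ⟨u, hu⟩ : ∃ u, t + 1 = k + u := ⟨t + 1 - k, by omega⟩
  have hn2k : n - 2 * k = 2 * u := by omega
  rw [hn2k] at key
  rcases Nat.eq_zero_or_pos k with hk0 | hkpos
  · rw [hk0] at key
    simp at key
    omega
  obtain ⟨k', rfl⟩ : ∃ k', k = k' + 1 := ⟨k - 1, by omega⟩
  obtain ⟨t', rfl⟩ : ∃ t', t = k' + u := by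
    refine ⟨0, by omega⟩
  have hred : k' + 1 - 1 = k' := by omega
  have hred2 : 2 * (k' + 1) - 1 = 2 * k' + 1 := by omega
  rw [hred, hred2] at key
  have h4u : 4 * u ≤ 4 * (u * u) + 1 := by
    rcases Nat.eq_zero_or_pos u with rfl | hu'
    · simp
    · have : u ≤ u * u := Nat.le_mul_of_pos_left u hu'
      omega
  nlinarith [key, h4u]

end YamAux

/-- Any two valid Yamanouchi symbols of even length `n` with the same number of 1s are
connected by at most `n(n-2)/4` adjacent transpositions, all of whose intermediate words
are valid Yamanouchi symbols. -/
theorem yamanouchi_connectivity (n : ℕ) (hn : Even n) (Y₁ Y₂ : Fin n → Fin 2)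
    (h1 : IsYamanouchi Y₁) (h2 : IsYamanouchi Y₂)
    (hw : (Finset.univ.filter fun i => Y₁ i = 1).card
        = (Finset.univ.filter fun i => Y₂ i = 1).card) :
    ∃ L : List (Fin n × Fin n),
      (∀ p ∈ L, (p.2 : ℕ) = (p.1 : ℕ) + 1)
      ∧ L.length ≤ n * (n - 2) / 4
      ∧ (∀ t : ℕ, IsYamanouchi (applySwaps (L.take t) Y₁))
      ∧ applySwaps L Y₁ = Y₂ := by
  have hw' : cnt Y₁ n = cnt Y₂ n := by
    rw [cnt_n, cnt_n]; exact hw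
  have hbound := dist_sum_bound hn Y₁ Y₂ h1 h2 hw'
  exact main_construct Y₂ h2 (n * (n - 2) / 4) Y₁ h1 hw' hbound
end
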